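/- For a word u of length k > n over a finite alphabet A, if |W_n(u)| = j (the number of distinct length-n subwords), and every length-n subword of u starting at a position in [1, k−2n] extends uniquely to the right (i.e., u[i+1, i+n] is determined by u[i, i+n−1] for i ∈ [1, k−2n]), then there exist 1 ≤ t₁ < t₂ ≤ j+1 with u[t₁, t₁+n−1] = u[t₂, t₂+n−1], and consequently u[t₁, k−n] is periodic with period t₂ − t₁ ≤ j. -/

import Mathlib

/-- `Wsub u k n m` is the set of length-`m` subwords of the word `u` (of length `k`,
indexed by positions `1, ..., k`) starting at positions `i` with `1 ≤ i ≤ k - n + 1`. -/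
def Wsub {A : Type*} (u : ℕ → A) (k n m : ℕ) : Set (Fin m → A) :=
  {w | ∃ i : ℕ, 1 ≤ i ∧ i ≤ k - n + 1 ∧ ∀ t : Fin m, w t = u (i + (t : ℕ))}

/-- If `u` (of length `k > 3n`) has `j ≤ n` distinct length-`n` subwords and each length-`n`
subword starting at a position in `[1, k-2n]` extends uniquely to the right, then two of the
windows starting at positions `1, ..., j+1` coincide, and consequently `u[t₁, k-n]` is
periodic with period `t₂ - t₁ ≤ j`. -/
theorem stmt6 {A : Type*} [Finite A] (n k j : ℕ) (hn : 1 ≤ n) (hk : 3 * n < k) (u : ℕ → A)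
    (hj : (Wsub u k n n).ncard = j) (hjn : j ≤ n)
    (huniq : ∀ i i' : ℕ, 1 ≤ i → i ≤ k - 2 * n → 1 ≤ i' → i' ≤ k - 2 * n →
      (∀ t < n, u (i + t) = u (i' + t)) → ∀ t < n, u (i + 1 + t) = u (i' + 1 + t)) :
    ∃ t₁ t₂ : ℕ, 1 ≤ t₁ ∧ t₁ < t₂ ∧ t₂ ≤ j + 1 ∧
      (∀ t < n, u (t₁ + t) = u (t₂ + t)) ∧ t₂ - t₁ ≤ j ∧
      ∀ i : ℕ, t₁ ≤ i → i + (t₂ - t₁) ≤ k - n → u (i + (t₂ - t₁)) = u i := by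
  have hfin : (Wsub u k n n).Finite := Set.toFinite _
  -- pigeonhole: the j+1 windows starting at 1,...,j+1 cannot all be distinct
  set f : Fin (j + 1) → (Fin n → A) := fun a t => u (a.1 + 1 + t.1) with hf
  obtain ⟨a, -, b, -, hab, hfab⟩ :=
    Finset.exists_ne_map_eq_of_card_lt_of_maps_to (f := f) (s := Finset.univ) (t := hfin.toFinset)
      (by
        rw [← Set.ncard_eq_toFinset_card _ hfin, hj]
        simp)
      (fun a _ => by
        rw [Finset.mem_coe, Set.Finite.mem_toFinset]
        exact ⟨a.1 + 1, by omega, by omega, fun t => rfl⟩)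
  -- wlog a < b
  obtain ⟨a, b, hab, hfab⟩ : ∃ a b : Fin (j + 1), a < b ∧ f a = f b := by
    rcases lt_or_gt_of_ne hab with h | h
    · exact ⟨a, b, h, hfab⟩
    · exact ⟨b, a, h, hfab.symm⟩
  refine ⟨a.1 + 1, b.1 + 1, by omega, by omega, by omega, ?_⟩
  have hwin : ∀ t < n, u (a.1 + 1 + t) = u (b.1 + 1 + t) := fun t ht => by
    have := congrFun hfab ⟨t, ht⟩
    simpa [hf] using this
  refine ⟨hwin, by omega, ?_⟩
  set t₁ := a.1 + 1
  set t₂ := b.1 + 1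
  have ht12 : t₁ < t₂ := by simp only [t₁, t₂]; omega
  have ht2 : t₂ ≤ n + 1 := by simp only [t₂]; omega
  set p := t₂ - t₁ with hp
  -- propagate the window equality
  have key : ∀ m, t₂ + m ≤ k - 2 * n + 1 → ∀ t < n, u (t₁ + m + t) = u (t₂ + m + t) := by
    intro m
    induction m with
    | zero => intro _ t ht; simpa using hwin t ht
    | succ m ih =>
      intro hm t ht
      have h1 : u (t₁ + m + 1 + t) = u (t₂ + m + 1 + t) :=
        huniq (t₁ + m) (t₂ + m) (by omega) (by omega) (by omega) (by omega)
          (ih (by omega)) t ht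
      have e1 : t₁ + (m + 1) + t = t₁ + m + 1 + t := by omega
      have e2 : t₂ + (m + 1) + t = t₂ + m + 1 + t := by omega
      rw [e1, e2]; exact h1
  intro i hi hik
  by_cases hcase : i + p ≤ k - 2 * n + 1
  · have := key (i - t₁) (by omega) 0 hn
    have e1 : t₁ + (i - t₁) + 0 = i := by omega
    have e2 : t₂ + (i - t₁) + 0 = i + p := by omega
    rw [e1, e2] at this
    exact this.symm
  · have ht2k : t₂ ≤ k - 2 * n + 1 := by omega
    set m := k - 2 * n + 1 - t₂ with hm
    have := key m (by omega) (i + p - (k - 2 * n + 1)) (by omega)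
    have e1 : t₁ + m + (i + p - (k - 2 * n + 1)) = i := by omega
    have e2 : t₂ + m + (i + p - (k - 2 * n + 1)) = i + p := by omega
    rw [e1, e2] at this
    exact this.symm
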